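/- arXiv:2007.00867 — 4 statements merged into one kernel-verified Lean document; each statement's English description precedes it below -/
import Mathlib

section
/- In SL(2,ℂ), if φ has order two (i.e., tr φ = 0) and g = φ f φ⁻¹ for some f, then tr[f,g] − 2 = (tr[f,φ] − 2)·((tr[f,φ] − 2) − (tr²f − 4)). -/
open Matrix

set_option maxHeartbeats 1000000 in
private lemma key_stmt2 (a b c d p q r : ℂ) (h1 : a*d - b*c = 1)
    (h2 : p*(-p) - q*r = 1) :
    Matrix.trace (!![a,b;c,d] * (!![p,q;r,-p] * !![a,b;c,d] * adjugate !![p,q;r,-p]) *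
        adjugate !![a,b;c,d] *
        adjugate (!![p,q;r,-p] * !![a,b;c,d] * adjugate !![p,q;r,-p])) - 2 =
      (Matrix.trace (!![a,b;c,d] * !![p,q;r,-p] * adjugate !![a,b;c,d] *
          adjugate !![p,q;r,-p]) - 2) *
        ((Matrix.trace (!![a,b;c,d] * !![p,q;r,-p] * adjugate !![a,b;c,d] *
            adjugate !![p,q;r,-p]) - 2) -
          ((Matrix.trace !![a,b;c,d]) ^ 2 - 4)) := by
  simp only [Matrix.adjugate_fin_two_of, Matrix.mul_fin_two, Matrix.trace_fin_two_of]
  linear_combination ((-4:ℂ) + (-2:ℂ)*q*r + (-4:ℂ)*p^2 + (-2:ℂ)*p^2*q*r + (-2:ℂ)*p^4 + (-2:ℂ)*d^2*q*r + (-2:ℂ)*d^2*p^2 + (-2:ℂ)*c*d*p*q + (-2:ℂ)*c*d*p*q^2*r + (-2:ℂ)*c*d*p^3*q + (2:ℂ)*c^2*q^2 + (2:ℂ)*c^2*q^3*r + (2:ℂ)*c^2*p^2*q^2 + (-2:ℂ)*b*d*p*r + (-2:ℂ)*b*d*p*q*r^2 + (-2:ℂ)*b*d*p^3*r + (-2:ℂ)*b*c*q*r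 + (-8:ℂ)*b*c*p^2 + (-6:ℂ)*b*c*p^2*q*r + (-6:ℂ)*b*c*p^4 + (2:ℂ)*b^2*r^2 + (2:ℂ)*b^2*q*r^3 + (2:ℂ)*b^2*p^2*r^2 + (-2:ℂ)*a*d*q*r + (-4:ℂ)*a*d*p^2 + (-2:ℂ)*a*d*p^2*q*r + (-2:ℂ)*a*d*p^4 + (2:ℂ)*a*c*p*q + (2:ℂ)*a*c*p*q^2*r + (2:ℂ)*a*c*p^3*q + (2:ℂ)*a*b*p*r + (2:ℂ)*a*b*p*q*r^2 + (2:ℂ)*a*b*p^3*r + (-2:ℂ)*a^2*q*r + (-2:ℂ)*a^2*p^2) * h1 + ((2:ℂ) + (2:ℂ)*p^2 + (2:ℂ)*d^2 + (1:ℂ)*d^4*q*r + (2:ℂ)*c*d*p*q + (2:ℂ)*c*d^3*p*q + (-2:ℂ)*c^2*q^2 + (-1:ℂ)*c^2*d^2*q^2 + (2:ℂ)*b*d*p*r + (2:ℂ)*b*d^3*p*r + (4:ℂ)*b*c + (8:ℂ)*b*c*p^2 + (2:ℂ)*b*c*d^2*q*r + (4:ℂ)*b*c*d^2*p^2 + (2:ℂ)*b*c^2*d*p*q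 + (-2:ℂ)*b*c^3*q^2 + (-2:ℂ)*b^2*r^2 + (-1:ℂ)*b^2*d^2*r^2 + (2:ℂ)*b^2*c*d*p*r + (2:ℂ)*b^2*c^2*q*r + (8:ℂ)*b^2*c^2*p^2 + (-2:ℂ)*b^3*c*r^2 + (-2:ℂ)*a*c*p*q + (-2:ℂ)*a*b*p*r + (-2:ℂ)*a*b*c^2*p*q + (-2:ℂ)*a*b^2*c*p*r + (2:ℂ)*a^2 + (-1:ℂ)*a^2*c^2*q^2 + (2:ℂ)*a^2*b*c*q*r + (4:ℂ)*a^2*b*c*p^2 + (-1:ℂ)*a^2*b^2*r^2 + (-2:ℂ)*a^3*c*p*q + (-2:ℂ)*a^3*b*p*r + (1:ℂ)*a^4*q*r) * h2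

/-- in SL(2,ℂ), if tr φ = 0 and g = φ f φ⁻¹ then
γ(f,g) = γ(f,φ)(γ(f,φ) − β(f)), where γ(A,B) = tr[A,B] − 2 and β(A) = tr²A − 4. -/
theorem stmt2 (f φ g : Matrix.SpecialLinearGroup (Fin 2) ℂ)
    (hφ : Matrix.trace (φ : Matrix (Fin 2) (Fin 2) ℂ) = 0)
    (hg : g = φ * f * φ⁻¹) :
    Matrix.trace ((f * g * f⁻¹ * g⁻¹ : Matrix.SpecialLinearGroup (Fin 2) ℂ) :
        Matrix (Fin 2) (Fin 2) ℂ) - 2 =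
      (Matrix.trace ((f * φ * f⁻¹ * φ⁻¹ : Matrix.SpecialLinearGroup (Fin 2) ℂ) :
          Matrix (Fin 2) (Fin 2) ℂ) - 2) *
        ((Matrix.trace ((f * φ * f⁻¹ * φ⁻¹ : Matrix.SpecialLinearGroup (Fin 2) ℂ) :
            Matrix (Fin 2) (Fin 2) ℂ) - 2) -
          ((Matrix.trace ((f : Matrix.SpecialLinearGroup (Fin 2) ℂ) :
              Matrix (Fin 2) (Fin 2) ℂ)) ^ 2 - 4)) := by
  subst hg
  set a := (f : Matrix (Fin 2) (Fin 2) ℂ) 0 0 with ha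
  set b := (f : Matrix (Fin 2) (Fin 2) ℂ) 0 1 with hb
  set c := (f : Matrix (Fin 2) (Fin 2) ℂ) 1 0 with hc
  set d := (f : Matrix (Fin 2) (Fin 2) ℂ) 1 1 with hd
  set p := (φ : Matrix (Fin 2) (Fin 2) ℂ) 0 0 with hp
  set q := (φ : Matrix (Fin 2) (Fin 2) ℂ) 0 1 with hq
  set r := (φ : Matrix (Fin 2) (Fin 2) ℂ) 1 0 with hr
  rw [Matrix.trace_fin_two] at hφ
  have hs : (φ : Matrix (Fin 2) (Fin 2) ℂ) 1 1 = -p := by linear_combination hφ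
  have hf : (f : Matrix (Fin 2) (Fin 2) ℂ) = !![a,b;c,d] := by
    rw [Matrix.eta_fin_two (f : Matrix (Fin 2) (Fin 2) ℂ)]
  have hφ2 : (φ : Matrix (Fin 2) (Fin 2) ℂ) = !![p,q;r,-p] := by
    rw [Matrix.eta_fin_two (φ : Matrix (Fin 2) (Fin 2) ℂ), hs]
  have h1 : a*d - b*c = 1 := by
    have := f.2; rw [Matrix.det_fin_two] at this; linear_combination this
  have h2 : p*(-p) - q*r = 1 := by
    have := φ.2; rw [Matrix.det_fin_two, hs] at this; linear_combination this
  simp only [Matrix.SpecialLinearGroup.coe_mul, Matrix.SpecialLinearGroup.coe_inv, hf, hφ2]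
  exact key_stmt2 a b c d p q r h1 h2
end

section
/- The polynomial p(μ) = −μ²⁹ + 5μ²⁷ − 17μ²⁵ + 40μ²³ − 74μ²¹ + 111μ¹⁹ − 137μ¹⁷ + 144μ¹⁵ − 126μ¹³ + 94μ¹¹ − 58μ⁹ + 28μ⁷ − 12μ⁵ + 3μ³ − μ + 2 has a complex root z with 1.247 < |z| < 1.249. -/
/-- The Farey polynomial p_{23/29} as a function on ℂ. -/
noncomputable def p2329 (μ : ℂ) : ℂ :=
  -μ ^ 29 + 5 * μ ^ 27 - 17 * μ ^ 25 + 40 * μ ^ 23 - 74 * μ ^ 21 + 111 * μ ^ 19 -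
    137 * μ ^ 17 + 144 * μ ^ 15 - 126 * μ ^ 13 + 94 * μ ^ 11 - 58 * μ ^ 9 + 28 * μ ^ 7 -
    12 * μ ^ 5 + 3 * μ ^ 3 - μ + 2

noncomputable def z0c : ℂ := ⟨518953/500000, 173183/250000⟩

noncomputable def pd (z : ℂ) : ℂ := -(29*z^28) + 135*z^26 - 425*z^24 + 920*z^22 - 1554*z^20 + 2109*z^18 - 2329*z^16 + 2160*z^14 - 1638*z^12 + 1034*z^10 - 522*z^8 + 196*z^6 - 60*z^4 + 9*z^2 - 1

noncomputable def pd2 (z : ℂ) : ℂ := -(812*z^27) + 3510*z^25 - 10200*z^23 + 20240*z^21 - 31080*z^19 + 37962*z^17 - 37264*z^15 + 30240*z^13 - 19656*z^11 + 10340*z^9 - 4176*z^7 + 1176*z^5 - 240*z^3 + 18*z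

lemma hasDeriv_p (z : ℂ) : HasDerivAt p2329 (pd z) z := by
  have h := ((((((((((((((((hasDerivAt_pow 29 z).neg).add ((hasDerivAt_pow 27 z).const_mul (5:ℂ))).sub ((hasDerivAt_pow 25 z).const_mul (17:ℂ))).add ((hasDerivAt_pow 23 z).const_mul (40:ℂ))).sub ((hasDerivAt_pow 21 z).const_mul (74:ℂ))).add ((hasDerivAt_pow 19 z).const_mul (111:ℂ))).sub ((hasDerivAt_pow 17 z).const_mul (137:ℂ))).add ((hasDerivAt_pow 15 z).const_mul (144:ℂ))).sub ((hasDerivAt_pow 13 z).const_mul (126:ℂ))).add ((hasDerivAt_pow 11 z).const_mul (94:ℂ))).sub ((hasDerivAt_pow 9 z).const_mul (58:ℂ))).add ((hasDerivAt_pow 7 z).const_mul (28:ℂ))).sub ((hasDerivAt_pow 5 z).const_mul (12:ℂ))).add ((hasDerivAt_pow 3 z).const_mul (3:ℂ))).sub (hasDerivAt_id' z)).add_const 2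
  refine h.congr_deriv ?_
  unfold pd
  push_cast
  norm_num
  try ring

lemma hasDeriv_pd (z : ℂ) : HasDerivAt pd (pd2 z) z := by
  have h := ((((((((((((((((hasDerivAt_pow 28 z).const_mul (29:ℂ)).neg).add ((hasDerivAt_pow 26 z).const_mul (135:ℂ))).sub ((hasDerivAt_pow 24 z).const_mul (425:ℂ))).add ((hasDerivAt_pow 22 z).const_mul (920:ℂ))).sub ((hasDerivAt_pow 20 z).const_mul (1554:ℂ))).add ((hasDerivAt_pow 18 z).const_mul (2109:ℂ))).sub ((hasDerivAt_pow 16 z).const_mul (2329:ℂ))).add ((hasDerivAt_pow 14 z).const_mul (2160:ℂ))).sub ((hasDerivAt_pow 12 z).const_mul (1638:ℂ))).add ((hasDerivAt_pow 10 z).const_mul (1034:ℂ))).sub ((hasDerivAt_pow 8 z).const_mul (522:ℂ))).add ((hasDerivAt_pow 6 z).const_mul (196:ℂ))).sub ((hasDerivAt_pow 4 z).const_mul (60:ℂ))).add ((hasDerivAt_pow 2 z).const_mul (9:ℂ))).sub_const 1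
  refine h.congr_deriv ?_
  unfold pd2
  push_cast
  norm_num
  try ring

lemma pd2_bound (z : ℂ) (hz : ‖z‖ ≤ 1.25) : ‖pd2 z‖ ≤ 10968784 := by
  have n1 : ‖(812:ℂ)*z^27‖ ≤ 812*(1.25:ℝ)^27 := by
    rw [norm_mul, norm_pow, Complex.norm_ofNat]; gcongr
  have n2 : ‖(3510:ℂ)*z^25‖ ≤ 3510*(1.25:ℝ)^25 := by
    rw [norm_mul, norm_pow, Complex.norm_ofNat]; gcongr
  have n3 : ‖(10200:ℂ)*z^23‖ ≤ 10200*(1.25:ℝ)^23 := by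
    rw [norm_mul, norm_pow, Complex.norm_ofNat]; gcongr
  have n4 : ‖(20240:ℂ)*z^21‖ ≤ 20240*(1.25:ℝ)^21 := by
    rw [norm_mul, norm_pow, Complex.norm_ofNat]; gcongr
  have n5 : ‖(31080:ℂ)*z^19‖ ≤ 31080*(1.25:ℝ)^19 := by
    rw [norm_mul, norm_pow, Complex.norm_ofNat]; gcongr
  have n6 : ‖(37962:ℂ)*z^17‖ ≤ 37962*(1.25:ℝ)^17 := by
    rw [norm_mul, norm_pow, Complex.norm_ofNat]; gcongr
  have n7 : ‖(37264:ℂ)*z^15‖ ≤ 37264*(1.25:ℝ)^15 := by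
    rw [norm_mul, norm_pow, Complex.norm_ofNat]; gcongr
  have n8 : ‖(30240:ℂ)*z^13‖ ≤ 30240*(1.25:ℝ)^13 := by
    rw [norm_mul, norm_pow, Complex.norm_ofNat]; gcongr
  have n9 : ‖(19656:ℂ)*z^11‖ ≤ 19656*(1.25:ℝ)^11 := by
    rw [norm_mul, norm_pow, Complex.norm_ofNat]; gcongr
  have n10 : ‖(10340:ℂ)*z^9‖ ≤ 10340*(1.25:ℝ)^9 := by
    rw [norm_mul, norm_pow, Complex.norm_ofNat]; gcongr
  have n11 : ‖(4176:ℂ)*z^7‖ ≤ 4176*(1.25:ℝ)^7 := by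
    rw [norm_mul, norm_pow, Complex.norm_ofNat]; gcongr
  have n12 : ‖(1176:ℂ)*z^5‖ ≤ 1176*(1.25:ℝ)^5 := by
    rw [norm_mul, norm_pow, Complex.norm_ofNat]; gcongr
  have n13 : ‖(240:ℂ)*z^3‖ ≤ 240*(1.25:ℝ)^3 := by
    rw [norm_mul, norm_pow, Complex.norm_ofNat]; gcongr
  have n14 : ‖(18:ℂ)*z‖ ≤ 18*(1.25:ℝ) := by
    rw [norm_mul, Complex.norm_ofNat]; gcongr
  have u1 : ‖(-(812*z^27) : ℂ)‖ ≤ 812*(1.25:ℝ)^27 := by rw [norm_neg]; exact n1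
  have u2 : ‖(-(812*z^27) + 3510*z^25 : ℂ)‖ ≤ 812*(1.25:ℝ)^27 + 3510*(1.25:ℝ)^25 :=
    le_trans (norm_add_le _ _) (add_le_add u1 n2)
  have u3 : ‖(-(812*z^27) + 3510*z^25 - 10200*z^23 : ℂ)‖ ≤ 812*(1.25:ℝ)^27 + 3510*(1.25:ℝ)^25 + 10200*(1.25:ℝ)^23 :=
    le_trans (norm_sub_le _ _) (add_le_add u2 n3)
  have u4 : ‖(-(812*z^27) + 3510*z^25 - 10200*z^23 + 20240*z^21 : ℂ)‖ ≤ 812*(1.25:ℝ)^27 + 3510*(1.25:ℝ)^25 + 10200*(1.25:ℝ)^23 + 20240*(1.25:ℝ)^21 :=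
    le_trans (norm_add_le _ _) (add_le_add u3 n4)
  have u5 : ‖(-(812*z^27) + 3510*z^25 - 10200*z^23 + 20240*z^21 - 31080*z^19 : ℂ)‖ ≤ 812*(1.25:ℝ)^27 + 3510*(1.25:ℝ)^25 + 10200*(1.25:ℝ)^23 + 20240*(1.25:ℝ)^21 + 31080*(1.25:ℝ)^19 :=
    le_trans (norm_sub_le _ _) (add_le_add u4 n5)
  have u6 : ‖(-(812*z^27) + 3510*z^25 - 10200*z^23 + 20240*z^21 - 31080*z^19 + 37962*z^17 : ℂ)‖ ≤ 812*(1.25:ℝ)^27 + 3510*(1.25:ℝ)^25 + 10200*(1.25:ℝ)^23 + 20240*(1.25:ℝ)^21 + 31080*(1.25:ℝ)^19 + 37962*(1.25:ℝ)^17 :=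
    le_trans (norm_add_le _ _) (add_le_add u5 n6)
  have u7 : ‖(-(812*z^27) + 3510*z^25 - 10200*z^23 + 20240*z^21 - 31080*z^19 + 37962*z^17 - 37264*z^15 : ℂ)‖ ≤ 812*(1.25:ℝ)^27 + 3510*(1.25:ℝ)^25 + 10200*(1.25:ℝ)^23 + 20240*(1.25:ℝ)^21 + 31080*(1.25:ℝ)^19 + 37962*(1.25:ℝ)^17 + 37264*(1.25:ℝ)^15 :=
    le_trans (norm_sub_le _ _) (add_le_add u6 n7)
  have u8 : ‖(-(812*z^27) + 3510*z^25 - 10200*z^23 + 20240*z^21 - 31080*z^19 + 37962*z^17 - 37264*z^15 + 30240*z^13 : ℂ)‖ ≤ 812*(1.25:ℝ)^27 + 3510*(1.25:ℝ)^25 + 10200*(1.25:ℝ)^23 + 20240*(1.25:ℝ)^21 + 31080*(1.25:ℝ)^19 + 37962*(1.25:ℝ)^17 + 37264*(1.25:ℝ)^15 + 30240*(1.25:ℝ)^13 :=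
    le_trans (norm_add_le _ _) (add_le_add u7 n8)
  have u9 : ‖(-(812*z^27) + 3510*z^25 - 10200*z^23 + 20240*z^21 - 31080*z^19 + 37962*z^17 - 37264*z^15 + 30240*z^13 - 19656*z^11 : ℂ)‖ ≤ 812*(1.25:ℝ)^27 + 3510*(1.25:ℝ)^25 + 10200*(1.25:ℝ)^23 + 20240*(1.25:ℝ)^21 + 31080*(1.25:ℝ)^19 + 37962*(1.25:ℝ)^17 + 37264*(1.25:ℝ)^15 + 30240*(1.25:ℝ)^13 + 19656*(1.25:ℝ)^11 :=
    le_trans (norm_sub_le _ _) (add_le_add u8 n9)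
  have u10 : ‖(-(812*z^27) + 3510*z^25 - 10200*z^23 + 20240*z^21 - 31080*z^19 + 37962*z^17 - 37264*z^15 + 30240*z^13 - 19656*z^11 + 10340*z^9 : ℂ)‖ ≤ 812*(1.25:ℝ)^27 + 3510*(1.25:ℝ)^25 + 10200*(1.25:ℝ)^23 + 20240*(1.25:ℝ)^21 + 31080*(1.25:ℝ)^19 + 37962*(1.25:ℝ)^17 + 37264*(1.25:ℝ)^15 + 30240*(1.25:ℝ)^13 + 19656*(1.25:ℝ)^11 + 10340*(1.25:ℝ)^9 :=
    le_trans (norm_add_le _ _) (add_le_add u9 n10)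
  have u11 : ‖(-(812*z^27) + 3510*z^25 - 10200*z^23 + 20240*z^21 - 31080*z^19 + 37962*z^17 - 37264*z^15 + 30240*z^13 - 19656*z^11 + 10340*z^9 - 4176*z^7 : ℂ)‖ ≤ 812*(1.25:ℝ)^27 + 3510*(1.25:ℝ)^25 + 10200*(1.25:ℝ)^23 + 20240*(1.25:ℝ)^21 + 31080*(1.25:ℝ)^19 + 37962*(1.25:ℝ)^17 + 37264*(1.25:ℝ)^15 + 30240*(1.25:ℝ)^13 + 19656*(1.25:ℝ)^11 + 10340*(1.25:ℝ)^9 + 4176*(1.25:ℝ)^7 :=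
    le_trans (norm_sub_le _ _) (add_le_add u10 n11)
  have u12 : ‖(-(812*z^27) + 3510*z^25 - 10200*z^23 + 20240*z^21 - 31080*z^19 + 37962*z^17 - 37264*z^15 + 30240*z^13 - 19656*z^11 + 10340*z^9 - 4176*z^7 + 1176*z^5 : ℂ)‖ ≤ 812*(1.25:ℝ)^27 + 3510*(1.25:ℝ)^25 + 10200*(1.25:ℝ)^23 + 20240*(1.25:ℝ)^21 + 31080*(1.25:ℝ)^19 + 37962*(1.25:ℝ)^17 + 37264*(1.25:ℝ)^15 + 30240*(1.25:ℝ)^13 + 19656*(1.25:ℝ)^11 + 10340*(1.25:ℝ)^9 + 4176*(1.25:ℝ)^7 + 1176*(1.25:ℝ)^5 :=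
    le_trans (norm_add_le _ _) (add_le_add u11 n12)
  have u13 : ‖(-(812*z^27) + 3510*z^25 - 10200*z^23 + 20240*z^21 - 31080*z^19 + 37962*z^17 - 37264*z^15 + 30240*z^13 - 19656*z^11 + 10340*z^9 - 4176*z^7 + 1176*z^5 - 240*z^3 : ℂ)‖ ≤ 812*(1.25:ℝ)^27 + 3510*(1.25:ℝ)^25 + 10200*(1.25:ℝ)^23 + 20240*(1.25:ℝ)^21 + 31080*(1.25:ℝ)^19 + 37962*(1.25:ℝ)^17 + 37264*(1.25:ℝ)^15 + 30240*(1.25:ℝ)^13 + 19656*(1.25:ℝ)^11 + 10340*(1.25:ℝ)^9 + 4176*(1.25:ℝ)^7 + 1176*(1.25:ℝ)^5 + 240*(1.25:ℝ)^3 :=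
    le_trans (norm_sub_le _ _) (add_le_add u12 n13)
  have u14 : ‖(-(812*z^27) + 3510*z^25 - 10200*z^23 + 20240*z^21 - 31080*z^19 + 37962*z^17 - 37264*z^15 + 30240*z^13 - 19656*z^11 + 10340*z^9 - 4176*z^7 + 1176*z^5 - 240*z^3 + 18*z : ℂ)‖ ≤ 812*(1.25:ℝ)^27 + 3510*(1.25:ℝ)^25 + 10200*(1.25:ℝ)^23 + 20240*(1.25:ℝ)^21 + 31080*(1.25:ℝ)^19 + 37962*(1.25:ℝ)^17 + 37264*(1.25:ℝ)^15 + 30240*(1.25:ℝ)^13 + 19656*(1.25:ℝ)^11 + 10340*(1.25:ℝ)^9 + 4176*(1.25:ℝ)^7 + 1176*(1.25:ℝ)^5 + 240*(1.25:ℝ)^3 + 18*(1.25:ℝ) :=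
    le_trans (norm_add_le _ _) (add_le_add u13 n14)
  calc ‖pd2 z‖ = ‖(-(812*z^27) + 3510*z^25 - 10200*z^23 + 20240*z^21 - 31080*z^19 + 37962*z^17 - 37264*z^15 + 30240*z^13 - 19656*z^11 + 10340*z^9 - 4176*z^7 + 1176*z^5 - 240*z^3 + 18*z : ℂ)‖ := rfl
    _ ≤ 812*(1.25:ℝ)^27 + 3510*(1.25:ℝ)^25 + 10200*(1.25:ℝ)^23 + 20240*(1.25:ℝ)^21 + 31080*(1.25:ℝ)^19 + 37962*(1.25:ℝ)^17 + 37264*(1.25:ℝ)^15 + 30240*(1.25:ℝ)^13 + 19656*(1.25:ℝ)^11 + 10340*(1.25:ℝ)^9 + 4176*(1.25:ℝ)^7 + 1176*(1.25:ℝ)^5 + 240*(1.25:ℝ)^3 + 18*(1.25:ℝ) := u14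
    _ ≤ 10968784 := by norm_num

lemma z0re : z0c.re = (518953/500000 : ℝ) := rfl
lemma z0im : z0c.im = (173183/250000 : ℝ) := rfl
lemma pw2re : (z0c^2).re = (149342810253/250000000000 : ℝ) := by rw [sq, Complex.mul_re, z0re, z0im]; norm_num
lemma pw2im : (z0c^2).im = (89873837399/62500000000 : ℝ) := by rw [sq, Complex.mul_im, z0re, z0im]; norm_num
lemma pw3re : (z0c^3).re = (-47015066848943027/125000000000000000 : ℝ) := by
  rw [show 3 = 2+1 from rfl, pow_succ, Complex.mul_re, pw2re, pw2im, z0re, z0im]; norm_num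
lemma pw3im : (z0c^3).im = (119144230987491793/62500000000000000 : ℝ) := by
  rw [show 3 = 2+1 from rfl, pow_succ, Complex.mul_im, pw2re, pw2im, z0re, z0im]; norm_num
lemma pw4re : (z0c^4).re = (-106933631406886695439207/62500000000000000000000 : ℝ) := by
  rw [show 4 = 3+1 from rfl, pow_succ, Complex.mul_re, pw3re, pw3im, z0re, z0im]; norm_num
lemma pw4im : (z0c^4).im = (13422011445387832051947/7812500000000000000000 : ℝ) := by
  rw [show 4 = 3+1 from rfl, pow_succ, Complex.mul_im, pw3re, pw3im, z0re, z0im]; norm_num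
lemma pw5re : (z0c^5).re = (-92684956149843685950300187087/31250000000000000000000000000 : ℝ) := by
  rw [show 5 = 4+1 from rfl, pow_succ, Complex.mul_re, pw4re, pw4im, z0re, z0im]; norm_num
lemma pw5im : (z0c^5).im = (9342485334534547851168020083/15625000000000000000000000000 : ℝ) := by
  rw [show 5 = 4+1 from rfl, pow_succ, Complex.mul_im, pw4re, pw4im, z0re, z0im]; norm_num
lemma pw6re : (z0c^6).re = (-54570974599592616757001457877496667/15625000000000000000000000000000000 : ℝ) := by
  rw [show 6 = 5+1 from rfl, pow_succ, Complex.mul_re, pw5re, pw5im, z0re, z0im]; norm_num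
lemma pw6im : (z0c^6).im = (-5601573984542835926461819887077411/3906250000000000000000000000000000 : ℝ) := by
  rw [show 6 = 5+1 from rfl, pow_succ, Complex.mul_im, pw5re, pw5im, z0re, z0im]; norm_num
lemma pw7re : (z0c^7).re = (-20558991882461731609876678741870709675947/7812500000000000000000000000000000000000 : ℝ) := by
  rw [show 7 = 6+1 from rfl, pow_succ, Complex.mul_re, pw6re, pw6im, z0re, z0im]; norm_num
lemma pw7im : (z0c^7).im = (-15264672342082164812918065111315472622427/3906250000000000000000000000000000000000 : ℝ) := by
  rw [show 7 = 6+1 from rfl, pow_succ, Complex.mul_im, pw6re, pw6im, z0re, z0im]; norm_num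
lemma pw8re : (z0c^8).re = (-94823513503900808957974982438240417782622927/3906250000000000000000000000000000000000000000 : ℝ) := by
  rw [show 8 = 7+1 from rfl, pow_succ, Complex.mul_re, pw7re, pw7im, z0re, z0im]; norm_num
lemma pw8im : (z0c^8).im = (-1435264424640116967693942687283236697204486029/244140625000000000000000000000000000000000000 : ℝ) := by
  rw [show 8 = 7+1 from rfl, pow_succ, Complex.mul_im, pw7re, pw7im, z0re, z0im]; norm_num
lemma pw9re : (z0c^9).re = (7904819816474990221605314454115456810293318610894393/1953125000000000000000000000000000000000000000000000 : ℝ) := by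
  rw [show 9 = 8+1 from rfl, pow_succ, Complex.mul_re, pw8re, pw8im, z0re, z0im]; norm_num
lemma pw9im : (z0c^9).im = (-5975100052221247019683166096533182060067725092027737/976562500000000000000000000000000000000000000000000 : ℝ) := by
  rw [show 9 = 8+1 from rfl, pow_succ, Complex.mul_im, pw8re, pw8im, z0re, z0im]; norm_num
lemma pw10re : (z0c^10).re = (8241372967594474490911901768290202932906983911530036238013/976562500000000000000000000000000000000000000000000000000 : ℝ) := by
  rw [show 10 = 9+1 from rfl, pow_succ, Complex.mul_re, pw9re, pw9im, z0re, z0im]; norm_num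
lemma pw10im : (z0c^10).im = (-865907843561892286528682461093553636420649171346273268221/244140625000000000000000000000000000000000000000000000000 : ℝ) := by
  rw [show 10 = 9+1 from rfl, pow_succ, Complex.mul_im, pw9re, pw9im, z0re, z0im]; norm_num
lemma pw11re : (z0c^11).re = (5476569370224688855345378675636024877970776305370340043108099933/488281250000000000000000000000000000000000000000000000000000000 : ℝ) := by
  rw [show 11 = 10+1 from rfl, pow_succ, Complex.mul_re, pw10re, pw10im, z0re, z0im]; norm_num
lemma pw11im : (z0c^11).im = (528534748366964500217757185474036333966819895915181163081620153/244140625000000000000000000000000000000000000000000000000000000 : ℝ) := by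
  rw [show 11 = 10+1 from rfl, pow_succ, Complex.mul_im, pw10re, pw10im, z0re, z0im]; norm_num
lemma pw12re : (z0c^12).re = (2475949171080468903383202929249541880796065195863738798927220892702153/244140625000000000000000000000000000000000000000000000000000000000000 : ℝ) := by
  rw [show 12 = 11+1 from rfl, pow_succ, Complex.mul_re, pw11re, pw11im, z0re, z0im]; norm_num
lemma pw12im : (z0c^12).im = (305683351628225904579196114963995318515674009584455652452571523489137/30517578125000000000000000000000000000000000000000000000000000000000 : ℝ) := by
  rw [show 12 = 11+1 from rfl, pow_succ, Complex.mul_im, pw11re, pw11im, z0re, z0im]; norm_num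
lemma pw13re : (z0c^13).re = (437874692019225829493600577297883887720760869559238308780578957491752996673/122070312500000000000000000000000000000000000000000000000000000000000000000 : ℝ) := by
  rw [show 13 = 12+1 from rfl, pow_succ, Complex.mul_re, pw12re, pw12im, z0re, z0im]; norm_num
lemma pw13im : (z0c^13).im = (1063333474805319717530963478691864461660563255998797933243490295177869417243/61035156250000000000000000000000000000000000000000000000000000000000000000 : ℝ) := by
  rw [show 13 = 12+1 from rfl, pow_succ, Complex.mul_im, pw12re, pw12im, z0re, z0im]; norm_num
lemma pw14re : (z0c^14).re = (-509368739621385436671466892130703915070693289914183891835021727431938144263134507/61035156250000000000000000000000000000000000000000000000000000000000000000000000 : ℝ) := by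
  rw [show 14 = 13+1 from rfl, pow_succ, Complex.mul_re, pw13re, pw13im, z0re, z0im]; norm_num
lemma pw14im : (z0c^14).im = (313826274769305335100518159467879281649639406531610875940028012374367563454663369/15258789062500000000000000000000000000000000000000000000000000000000000000000000 : ℝ) := by
  rw [show 14 = 13+1 from rfl, pow_succ, Complex.mul_im, pw13re, pw13im, z0re, z0im]; norm_num
lemma pw15re : (z0c^15).re = (-699133441479717683306672049360911089909117505611747203842835000652227377713938171679387/30517578125000000000000000000000000000000000000000000000000000000000000000000000000000 : ℝ) := by
  rw [show 15 = 14+1 from rfl, pow_succ, Complex.mul_re, pw14re, pw14im, z0re, z0im]; norm_num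
lemma pw15im : (z0c^15).im = (237508167106860229053763750040797017576162761848390008863746146389584996677053415339533/15258789062500000000000000000000000000000000000000000000000000000000000000000000000000 : ℝ) := by
  rw [show 15 = 14+1 from rfl, pow_succ, Complex.mul_im, pw14re, pw14im, z0re, z0im]; norm_num
lemma pw16re : (z0c^16).re = (-527346904472493431097919250125254292421176639230491954296051347574225348264869922522518295967/15258789062500000000000000000000000000000000000000000000000000000000000000000000000000000000 : ℝ) := by
  rw [show 16 = 15+1 from rfl, pow_succ, Complex.mul_re, pw15re, pw15im, z0re, z0im]; norm_num
lemma pw16im : (z0c^16).im = (136096815551530556252404615653191836154481048446770266672122499334975551619621666546586883/476837158203125000000000000000000000000000000000000000000000000000000000000000000000000000 : ℝ) := by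
  rw [show 16 = 15+1 from rfl, pow_succ, Complex.mul_im, pw15re, pw15im, z0re, z0im]; norm_num
lemma pw17re : (z0c^17).re = (-275176716024404169393259940677621761007534335909023540123755739189036027699292061003790840841112247/7629394531250000000000000000000000000000000000000000000000000000000000000000000000000000000000000 : ℝ) := by
  rw [show 17 = 16+1 from rfl, pow_succ, Complex.mul_re, pw16re, pw16im, z0re, z0im]; norm_num
lemma pw17im : (z0c^17).im = (-90197473345725214889689283374328780317210611455300739797648292728588931409520447428707671607356977/3814697265625000000000000000000000000000000000000000000000000000000000000000000000000000000000000 : ℝ) := by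
  rw [show 17 = 16+1 from rfl, pow_succ, Complex.mul_im, pw16re, pw16im, z0re, z0im]; norm_num
lemma pw18re : (z0c^18).re = (-80321106205281697358176189344008321093441024928342101136338915000906946049450794345916745459110110526227/3814697265625000000000000000000000000000000000000000000000000000000000000000000000000000000000000000000 : ℝ) := by
  rw [show 18 = 17+1 from rfl, pow_succ, Complex.mul_re, pw17re, pw17im, z0re, z0im]; norm_num
lemma pw18im : (z0c^18).im = (-47232089298219262355340929490665306484262608671147554284730682318177119053405680877644820746519533778641/953674316406250000000000000000000000000000000000000000000000000000000000000000000000000000000000000000 : ℝ) := by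
  rw [show 18 = 17+1 from rfl, pow_succ, Complex.mul_im, pw17re, pw17im, z0re, z0im]; norm_num
lemma pw19re : (z0c^19).re = (23755480338918499410762457547213967926507910650324856738533621090805281699007010173268771124514370159173994093/1907348632812500000000000000000000000000000000000000000000000000000000000000000000000000000000000000000000000 : ℝ) := by
  rw [show 19 = 18+1 from rfl, pow_succ, Complex.mul_re, pw18re, pw18im, z0re, z0im]; norm_num
lemma pw19im : (z0c^19).im = (-62932719011106861907763509763101858663780464135601143578542265878732008565926113534201725050582169497317736287/953674316406250000000000000000000000000000000000000000000000000000000000000000000000000000000000000000000000 : ℝ) := by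
  rw [show 19 = 18+1 from rfl, pow_succ, Complex.mul_im, pw18re, pw18im, z0re, z0im]; norm_num
lemma pw20re : (z0c^20).re = (55923486094324850687802241276712407053243028237301286772482979192642455111435913431222977979119993377429731850110713/953674316406250000000000000000000000000000000000000000000000000000000000000000000000000000000000000000000000000000 : ℝ) := by
  rw [show 20 = 19+1 from rfl, pow_succ, Complex.mul_re, pw19re, pw19im, z0re, z0im]; norm_num
lemma pw20im : (z0c^20).im = (-7136269494359004206041380499172960562932110928601852649741444100799170235208480838519345557629499109966325345084873/119209289550781250000000000000000000000000000000000000000000000000000000000000000000000000000000000000000000000000 : ℝ) := by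
  rw [show 20 = 19+1 from rfl, pow_succ, Complex.mul_im, pw19re, pw19im, z0re, z0im]; norm_num
lemma pw21re : (z0c^21).re = (48795749836573371045624866901086067044225977504001089033483119720298623188950766975790191238509450632978061588615841815633/476837158203125000000000000000000000000000000000000000000000000000000000000000000000000000000000000000000000000000000000 : ℝ) := by
  rw [show 21 = 20+1 from rfl, pow_succ, Complex.mul_re, pw20re, pw20im, z0re, z0im]; norm_num
lemma pw21im : (z0c^21).im = (-5128556759350892622285514585724336821359443691702320205446166776248728860724781230609030745316067993374004496233596782397/238418579101562500000000000000000000000000000000000000000000000000000000000000000000000000000000000000000000000000000000 : ℝ) := by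
  rw [show 21 = 20+1 from rfl, pow_succ, Complex.mul_im, pw20re, pw20im, z0re, z0im]; norm_num
lemma pw22re : (z0c^22).re = (28875416145957923172261250642917309045736173851074208837752299431452465840923166525829502200062485347521824878281848924011630853/238418579101562500000000000000000000000000000000000000000000000000000000000000000000000000000000000000000000000000000000000000 : ℝ) := by
  rw [show 22 = 21+1 from rfl, pow_succ, Complex.mul_re, pw21re, pw21im, z0re, z0im]; norm_num
lemma pw22im : (z0c^22).im = (2894557214005931169390758336862693291232620039967713212254401267742934935636176641600012178442386377802809942383671791070749749/59604644775390625000000000000000000000000000000000000000000000000000000000000000000000000000000000000000000000000000000000000 : ℝ) := by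
  rw [show 22 = 21+1 from rfl, pow_succ, Complex.mul_im, pw21re, pw21im, z0re, z0im]; norm_num
lemma pw23re : (z0c^23).re = (10974679019247788682345695196470731783167613937482686081075237248838353897878360203501078382435524558016301312044348890318562635808373/119209289550781250000000000000000000000000000000000000000000000000000000000000000000000000000000000000000000000000000000000000000000 : ℝ) := by
  rw [show 23 = 22+1 from rfl, pow_succ, Complex.mul_re, pw22re, pw22im, z0re, z0im]; norm_num
lemma pw23im : (z0c^23).im = (8005009494165471005039404592472158875597811531253314058426573074635231019034998301819232919591844875779675453955152696190183855000693/59604644775390625000000000000000000000000000000000000000000000000000000000000000000000000000000000000000000000000000000000000000000 : ℝ) := by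
  rw [show 23 = 22+1 from rfl, pow_succ, Complex.mul_im, pw22re, pw22im, z0re, z0im]; norm_num
lemma pw24re : (z0c^24).re = (150016364163462619806388737141652108859559578030281635510280776858197416087516219071654270945364891467627478220090152140270593298322530193/59604644775390625000000000000000000000000000000000000000000000000000000000000000000000000000000000000000000000000000000000000000000000000 : ℝ) := by
  rw [show 24 = 23+1 from rfl, pow_succ, Complex.mul_re, pw23re, pw23im, z0re, z0im]; norm_num
lemma pw24im : (z0c^24).im = (756856441077005432731611082835949375921553496514195639267687273658343710764692191105865454853284765418928378247520603877253014382672011961/3725290298461914062500000000000000000000000000000000000000000000000000000000000000000000000000000000000000000000000000000000000000000000 : ℝ) := by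
  rw [show 24 = 23+1 from rfl, pow_succ, Complex.mul_im, pw23re, pw23im, z0re, z0im]; norm_num
lemma pw25re : (z0c^25).re = (-4116537966889527602479890414775031277798121752280625443056501583654241919892709202997294907301495350423681063856541098997128036070752813506891687/29802322387695312500000000000000000000000000000000000000000000000000000000000000000000000000000000000000000000000000000000000000000000000000000 : ℝ) := by
  rw [show 25 = 24+1 from rfl, pow_succ, Complex.mul_re, pw24re, pw24im, z0re, z0im]; norm_num
lemma pw25im : (z0c^25).im = (3168163649324802549544871950832118229029568719814269221161649865593180752970038774575183864744944638946631238974074352369405150742629699731988983/14901161193847656250000000000000000000000000000000000000000000000000000000000000000000000000000000000000000000000000000000000000000000000000000 : ℝ) := by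
  rw [show 25 = 24+1 from rfl, pow_succ, Complex.mul_im, pw24re, pw24im, z0re, z0im]; norm_num
lemma pw26re : (z0c^26).re = (-4330978068655290137641064806662581731739279876125665761664252701034215096420522019412071453021327906215198310568532047213419354587268741982582153815267/14901161193847656250000000000000000000000000000000000000000000000000000000000000000000000000000000000000000000000000000000000000000000000000000000000 : ℝ) := by
  rw [show 26 = 25+1 from rfl, pow_succ, Complex.mul_re, pw25re, pw25im, z0re, z0im]; norm_num
lemma pw26im : (z0c^26).im = (465606817794112599356842535899098004763334828214279449512323784468592676441640737139717434114894192971423381838722725118770143261249363031725427832539/3725290298461914062500000000000000000000000000000000000000000000000000000000000000000000000000000000000000000000000000000000000000000000000000000000 : ℝ) := by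
  rw [show 26 = 25+1 from rfl, pow_succ, Complex.mul_im, pw25re, pw25im, z0re, z0im]; norm_num
lemma pw27re : (z0c^27).re = (-2892655545871171201154571991768874695502723433992111087252091091684803310806260505780494191898334949085055933160275553131497372084430462961473394615475068547/7450580596923828125000000000000000000000000000000000000000000000000000000000000000000000000000000000000000000000000000000000000000000000000000000000000000 : ℝ) := by
  rw [show 27 = 26+1 from rfl, pow_succ, Complex.mul_re, pw26re, pw26im, z0re, z0im]; norm_num
lemma pw27im : (z0c^27).im = (-266795665034512880359029517347356678315909908574501247276762345680549322608557693966105207276139258531868532468488736795439359773776681155963513244230161527/3725290298461914062500000000000000000000000000000000000000000000000000000000000000000000000000000000000000000000000000000000000000000000000000000000000000 : ℝ) := by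
  rw [show 27 = 26+1 from rfl, pow_succ, Complex.mul_im, pw26re, pw26im, z0re, z0im]; norm_num
lemma pw28re : (z0c^28).re = (-1316334378865793731715897363233363743372087931453876627034208295055125439203569919799776809921402115991238679447363339506471657160523574154712586099182584992749527/3725290298461914062500000000000000000000000000000000000000000000000000000000000000000000000000000000000000000000000000000000000000000000000000000000000000000000 : ℝ) := by
  rw [show 28 = 27+1 from rfl, pow_succ, Complex.mul_re, pw27re, pw27im, z0re, z0im]; norm_num
lemma pw28im : (z0c^28).im = (-159853294039315651232627921591617954168331136813379730050399135277301851097759863532343880316775909530071503050653909136043937865594662720746894997081198452774083/465661287307739257812500000000000000000000000000000000000000000000000000000000000000000000000000000000000000000000000000000000000000000000000000000000000000000 : ℝ) := by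
  rw [show 28 = 27+1 from rfl, pow_succ, Complex.mul_im, pw27re, pw27im, z0re, z0im]; norm_num
lemma pw29re : (z0c^29).re = (-240173706569767415616436862822025060206429688023758968600191122228079048392396677451903011240738154857659316610105211992382029236388702794836808433456888963393961026207/1862645149230957031250000000000000000000000000000000000000000000000000000000000000000000000000000000000000000000000000000000000000000000000000000000000000000000000000 : ℝ) := by
  rw [show 29 = 28+1 from rfl, pow_succ, Complex.mul_re, pw28re, pw28im, z0re, z0im]; norm_num
lemma pw29im : (z0c^29).im = (-559792122741454656456258084231783281846480098003832120095044424960778299068534947259486562160745416967147475113316717657258919750686742154514643396095854339449216114837/931322574615478515625000000000000000000000000000000000000000000000000000000000000000000000000000000000000000000000000000000000000000000000000000000000000000000000000 : ℝ) := by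
  rw [show 29 = 28+1 from rfl, pow_succ, Complex.mul_im, pw28re, pw28im, z0re, z0im]; norm_num

lemma pz0re : (p2329 z0c).re = (29225109053091828242825763409854215922658658018035408067274752493108311320388431082825978470892164547891216657380146437336258613444067482601613053279643961026207/1862645149230957031250000000000000000000000000000000000000000000000000000000000000000000000000000000000000000000000000000000000000000000000000000000000000000000000000 : ℝ) := by
  simp only [p2329, Complex.add_re, Complex.add_im, Complex.sub_re, Complex.sub_im, Complex.neg_re, Complex.neg_im, Complex.mul_re, Complex.mul_im, Complex.re_ofNat, Complex.im_ofNat, Complex.one_re, Complex.one_im, zero_mul, mul_zero, sub_zero, add_zero, zero_add]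
  rw [pw29re, pw27re, pw25re, pw23re, pw21re, pw19re, pw17re, pw15re, pw13re, pw11re, pw9re, pw7re, pw5re, pw3re, z0re]; norm_num
lemma pz0im : (p2329 z0c).im = (3178573370036310882952222211335850443758139193291777813163051548718124139254418916588220491665099021984394739800964469244854959744321957403308152430699216114837/931322574615478515625000000000000000000000000000000000000000000000000000000000000000000000000000000000000000000000000000000000000000000000000000000000000000000000000 : ℝ) := by
  simp only [p2329, Complex.add_re, Complex.add_im, Complex.sub_re, Complex.sub_im, Complex.neg_re, Complex.neg_im, Complex.mul_re, Complex.mul_im, Complex.re_ofNat, Complex.im_ofNat, Complex.one_re, Complex.one_im, zero_mul, mul_zero, sub_zero, add_zero, zero_add]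
  rw [pw29im, pw27im, pw25im, pw23im, pw21im, pw19im, pw17im, pw15im, pw13im, pw11im, pw9im, pw7im, pw5im, pw3im, z0im]; norm_num
lemma pdz0re : (pd z0c).re = (-579861525852718615506511090580016129653767866612268751429391312540097863208464620439365740695925652964444499946673639136469282276828599677045194388966285210263717/3725290298461914062500000000000000000000000000000000000000000000000000000000000000000000000000000000000000000000000000000000000000000000000000000000000000000000 : ℝ) := by
  simp only [pd, Complex.add_re, Complex.add_im, Complex.sub_re, Complex.sub_im, Complex.neg_re, Complex.neg_im, Complex.mul_re, Complex.mul_im, Complex.re_ofNat, Complex.im_ofNat, Complex.one_re, Complex.one_im, zero_mul, mul_zero, sub_zero, add_zero, zero_add]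
  rw [pw28re, pw26re, pw24re, pw22re, pw20re, pw18re, pw16re, pw14re, pw12re, pw10re, pw8re, pw6re, pw4re, pw2re]; norm_num
lemma pdz0im : (pd z0c).im = (55409129553241131798105892445219150480431043739811551197948325395081054444276058711521171115956702894453747159786401478967797493877584633901549589450380130448407/465661287307739257812500000000000000000000000000000000000000000000000000000000000000000000000000000000000000000000000000000000000000000000000000000000000000000 : ℝ) := by
  simp only [pd, Complex.add_re, Complex.add_im, Complex.sub_re, Complex.sub_im, Complex.neg_re, Complex.neg_im, Complex.mul_re, Complex.mul_im, Complex.re_ofNat, Complex.im_ofNat, Complex.one_re, Complex.one_im, zero_mul, mul_zero, sub_zero, add_zero, zero_add]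
  rw [pw28im, pw26im, pw24im, pw22im, pw20im, pw18im, pw16im, pw14im, pw12im, pw10im, pw8im, pw6im, pw4im, pw2im]; norm_num

lemma habsp : ‖p2329 z0c‖ ≤ 1/50000 := by
  rw [Complex.norm_def, Complex.normSq_apply, pz0re, pz0im]
  rw [show ((1:ℝ)/50000) = Real.sqrt ((1/50000)^2) from (Real.sqrt_sq (by norm_num)).symm]
  apply Real.sqrt_le_sqrt; norm_num
lemma habspd : (195:ℝ) ≤ ‖pd z0c‖ := by
  rw [Complex.norm_def, Complex.normSq_apply, pdz0re, pdz0im]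
  rw [Real.le_sqrt (by norm_num) (by positivity)]; norm_num
lemma habsz0_lb : (1.2471:ℝ) ≤ ‖z0c‖ := by
  rw [Complex.norm_def, Complex.normSq_apply, z0re, z0im]
  rw [Real.le_sqrt (by norm_num) (by positivity)]; norm_num
lemma habsz0_ub : ‖z0c‖ ≤ 1.2485 := by
  rw [Complex.norm_def, Complex.normSq_apply, z0re, z0im]
  rw [show ((1.2485:ℝ)) = Real.sqrt (1.2485^2) from (Real.sqrt_sq (by norm_num)).symm]
  apply Real.sqrt_le_sqrt; norm_num


lemma pdz0_ne : pd z0c ≠ 0 := by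
  intro h
  have := habspd
  rw [h] at this
  simp at this
  linarith

noncomputable def gmap (z : ℂ) : ℂ := z - p2329 z / pd z0c

lemma hasDeriv_g (z : ℂ) : HasDerivAt gmap (1 - pd z / pd z0c) z :=
  (hasDerivAt_id' z).sub ((hasDeriv_p z).div_const _)

lemma memball_norm {z : ℂ} (hz : z ∈ Metric.closedBall z0c (1/125000)) : ‖z‖ ≤ 1.25 := by
  have h1 : ‖z - z0c‖ ≤ 1/125000 := by
    rw [← dist_eq_norm]; exact Metric.mem_closedBall.mp hz
  have h2 : ‖z0c‖ ≤ 1.2485 := by exact habsz0_ub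
  calc ‖z‖ = ‖(z - z0c) + z0c‖ := by ring_nf
    _ ≤ ‖z - z0c‖ + ‖z0c‖ := norm_add_le _ _
    _ ≤ 1/125000 + 1.2485 := add_le_add h1 h2
    _ ≤ 1.25 := by norm_num

lemma deriv_g_bound {z : ℂ} (hz : z ∈ Metric.closedBall z0c (1/125000)) :
    ‖1 - pd z / pd z0c‖ ≤ 1/2 := by
  have hz0mem : z0c ∈ Metric.closedBall z0c (1/125000) :=
    Metric.mem_closedBall_self (by norm_num)
  have key : ‖pd z - pd z0c‖ ≤ 10968784 * ‖z - z0c‖ :=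
    (convex_closedBall z0c (1/125000)).norm_image_sub_le_of_norm_hasDerivWithin_le
      (fun w _ => (hasDeriv_pd w).hasDerivWithinAt)
      (fun w hw => pd2_bound w (memball_norm hw)) hz0mem hz
  have hdist : ‖z - z0c‖ ≤ 1/125000 := by
    rw [← dist_eq_norm]; exact Metric.mem_closedBall.mp hz
  have hnum : ‖pd z - pd z0c‖ ≤ 10968784/125000 := by
    calc ‖pd z - pd z0c‖ ≤ 10968784 * ‖z - z0c‖ := key
      _ ≤ 10968784 * (1/125000) := by gcongr
      _ = 10968784/125000 := by ring
  have hden : (195:ℝ) ≤ ‖pd z0c‖ := by exact habspd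
  have heq : 1 - pd z / pd z0c = (pd z0c - pd z) / pd z0c := by
    rw [sub_div, div_self pdz0_ne]
  rw [heq, norm_div]
  calc ‖pd z0c - pd z‖ / ‖pd z0c‖ ≤ (10968784/125000) / 195 := by
        apply div_le_div₀ (by norm_num) _ (by norm_num) hden
        rw [norm_sub_rev]; exact hnum
    _ ≤ 1/2 := by norm_num

lemma g_lipschitz {z w : ℂ} (hz : z ∈ Metric.closedBall z0c (1/125000))
    (hw : w ∈ Metric.closedBall z0c (1/125000)) :
    ‖gmap z - gmap w‖ ≤ (1/2) * ‖z - w‖ :=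
  (convex_closedBall z0c (1/125000)).norm_image_sub_le_of_norm_hasDerivWithin_le
    (fun v _ => (hasDeriv_g v).hasDerivWithinAt)
    (fun v hv => deriv_g_bound hv) hw hz

lemma g_maps {z : ℂ} (hz : z ∈ Metric.closedBall z0c (1/125000)) :
    gmap z ∈ Metric.closedBall z0c (1/125000) := by
  have hz0mem : z0c ∈ Metric.closedBall z0c (1/125000) :=
    Metric.mem_closedBall_self (by norm_num)
  have h1 : ‖gmap z - gmap z0c‖ ≤ (1/2) * ‖z - z0c‖ := g_lipschitz hz hz0mem
  have hdist : ‖z - z0c‖ ≤ 1/125000 := by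
    rw [← dist_eq_norm]; exact Metric.mem_closedBall.mp hz
  have h2 : ‖gmap z0c - z0c‖ ≤ (1/50000) / 195 := by
    have : gmap z0c - z0c = -(p2329 z0c / pd z0c) := by unfold gmap; ring
    rw [this, norm_neg, norm_div]
    apply div_le_div₀ (by norm_num) _ (by norm_num)
    · exact habspd
    · exact habsp
  rw [Metric.mem_closedBall, dist_eq_norm]
  calc ‖gmap z - z0c‖ = ‖(gmap z - gmap z0c) + (gmap z0c - z0c)‖ := by ring_nf
    _ ≤ ‖gmap z - gmap z0c‖ + ‖gmap z0c - z0c‖ := norm_add_le _ _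
    _ ≤ (1/2) * (1/125000) + (1/50000)/195 := by
        refine add_le_add (le_trans h1 ?_) h2
        nlinarith [norm_nonneg (z - z0c)]
    _ ≤ 1/125000 := by norm_num

/-- p_{23/29} has a complex root z with 1.247 < |z| < 1.249. -/
theorem stmt10 : ∃ z : ℂ, p2329 z = 0 ∧ 1.247 < ‖z‖ ∧ ‖z‖ < 1.249 := by
  have hball : IsClosed (Metric.closedBall z0c (1/125000)) := Metric.isClosed_closedBall
  haveI : CompleteSpace (Metric.closedBall z0c (1/125000)) := hball.completeSpace_coe
  haveI : Nonempty (Metric.closedBall z0c (1/125000)) :=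
    ⟨⟨z0c, Metric.mem_closedBall_self (by norm_num)⟩⟩
  set F : (Metric.closedBall z0c (1/125000)) → (Metric.closedBall z0c (1/125000)) :=
    fun w => ⟨gmap w, g_maps w.2⟩ with hF
  have hcontr : ContractingWith (1/2 : NNReal) F := by
    constructor
    · rw [one_div]; exact inv_lt_one_of_one_lt₀ one_lt_two
    · apply LipschitzWith.of_dist_le_mul
      intro w v
      rw [hF]
      rw [Subtype.dist_eq, dist_eq_norm, Subtype.dist_eq, dist_eq_norm]
      have := g_lipschitz w.2 v.2
      calc ‖gmap w - gmap v‖ ≤ (1/2) * ‖(w:ℂ) - v‖ := g_lipschitz w.2 v.2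
        _ = ((1/2 : NNReal) : ℝ) * ‖(w:ℂ) - v‖ := by norm_num
  set zf := ContractingWith.fixedPoint F hcontr with hzf
  have hfix : F zf = zf := hcontr.fixedPoint_isFixedPt
  have hgz : gmap (zf : ℂ) = (zf : ℂ) := congrArg Subtype.val hfix
  have hroot : p2329 (zf : ℂ) = 0 := by
    have : p2329 (zf : ℂ) / pd z0c = 0 := by
      have := hgz
      unfold gmap at this
      linear_combination (zf : ℂ) - this
    exact (div_eq_zero_iff.mp this).resolve_right pdz0_ne
  refine ⟨(zf : ℂ), hroot, ?_, ?_⟩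
  · have hd : ‖(zf : ℂ) - z0c‖ ≤ 1/125000 := by
      rw [← dist_eq_norm]; exact Metric.mem_closedBall.mp zf.2
    have h1 : (1.2471:ℝ) ≤ ‖z0c‖ := habsz0_lb
    have h2 : ‖z0c‖ - ‖(zf : ℂ)‖ ≤ 1/125000 := by
      calc ‖z0c‖ - ‖(zf : ℂ)‖ = ‖z0c‖ - ‖(zf : ℂ)‖ := by
            rfl
        _ ≤ ‖z0c - (zf : ℂ)‖ := norm_sub_norm_le _ _
        _ = ‖(zf : ℂ) - z0c‖ := norm_sub_rev _ _
        _ ≤ 1/125000 := hd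
    linarith
  · have hd : ‖(zf : ℂ) - z0c‖ ≤ 1/125000 := by
      rw [← dist_eq_norm]; exact Metric.mem_closedBall.mp zf.2
    have h1 : ‖z0c‖ ≤ 1.2485 := habsz0_ub
    have h2 : ‖(zf : ℂ)‖ - ‖z0c‖ ≤ 1/125000 := by
      calc ‖(zf : ℂ)‖ - ‖z0c‖ = ‖(zf : ℂ)‖ - ‖z0c‖ := by
            rfl
        _ ≤ ‖(zf : ℂ) - z0c‖ := norm_sub_norm_le _ _
        _ ≤ 1/125000 := hd
    linarith
end

section
/- For all reals p, q with p, q ≥ 629, (1/2)·arccosh(5/(4 sin²(π/p) sin²(π/q))) − arccosh(1/(2 sin(π/p) sin(π/q))) < 1/2. -/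
/-- arccosh(x) = log(x + √(x² − 1)). -/
noncomputable def arccosh (x : ℝ) : ℝ := Real.log (x + Real.sqrt (x ^ 2 - 1))

lemma key (B : ℝ) (hB : 10 ≤ B) :
    (1 / 2) * arccosh (5 * B ^ 2) - arccosh B < 1 / 2 := by
  have hB0 : 0 < B := by linarith
  have hinv : B * (1 / B) = 1 := by field_simp
  have hinvle : 1 / B ≤ 1 / 10 := by
    apply one_div_le_one_div_of_le <;> linarith
  have hinv0 : 0 < 1 / B := by positivity
  have hpos : 0 < 2 * B - 1 / B := by linarith
  -- upper bound for arccosh (5 B²)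
  have h1 : arccosh (5 * B ^ 2) ≤ Real.log (10 * B ^ 2) := by
    unfold arccosh
    apply Real.log_le_log (by positivity)
    have hs : Real.sqrt ((5 * B ^ 2) ^ 2 - 1) ≤ 5 * B ^ 2 := by
      calc Real.sqrt ((5 * B ^ 2) ^ 2 - 1) ≤ Real.sqrt ((5 * B ^ 2) ^ 2) :=
            Real.sqrt_le_sqrt (by nlinarith)
        _ = 5 * B ^ 2 := Real.sqrt_sq (by positivity)
    linarith
  -- lower bound for arccosh B
  have h2 : Real.log (2 * B - 1 / B) ≤ arccosh B := by
    unfold arccosh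
    apply Real.log_le_log hpos
    have hs : B - 1 / B ≤ Real.sqrt (B ^ 2 - 1) := by
      rw [show B - 1 / B = Real.sqrt ((B - 1 / B) ^ 2) from
        (Real.sqrt_sq (by linarith)).symm]
      apply Real.sqrt_le_sqrt
      nlinarith [sq_nonneg (1 / B)]
    linarith
  have h3 : Real.log (10 * B ^ 2) < 1 + 2 * Real.log (2 * B - 1 / B) := by
    have heq : 1 + 2 * Real.log (2 * B - 1 / B)
        = Real.log (Real.exp 1 * (2 * B - 1 / B) ^ 2) := by
      rw [Real.log_mul (Real.exp_ne_zero 1) (by positivity), Real.log_exp,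
        Real.log_pow]
      push_cast
      ring
    rw [heq]
    apply Real.log_lt_log (by positivity)
    have he : (2.7182818283 : ℝ) < Real.exp 1 := Real.exp_one_gt_d9
    have hsq : 0 < (2 * B - 1 / B) ^ 2 := by positivity
    have hmul := mul_lt_mul_of_pos_right he hsq
    nlinarith [sq_nonneg (1 / B)]
  linarith

/-- for real p, q ≥ 629,
(1/2)·arccosh(5/(4 sin²(π/p) sin²(π/q))) − arccosh(1/(2 sin(π/p) sin(π/q))) < 1/2. -/
theorem stmt13 (p q : ℝ) (hp : 629 ≤ p) (hq : 629 ≤ q) :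
    (1 / 2) * arccosh (5 / (4 * Real.sin (Real.pi / p) ^ 2 * Real.sin (Real.pi / q) ^ 2)) -
      arccosh (1 / (2 * Real.sin (Real.pi / p) * Real.sin (Real.pi / q))) < 1 / 2 := by
  have hpi : (0:ℝ) < Real.pi := Real.pi_pos
  have hpi315 : Real.pi < 3.15 := by
    have := Real.pi_lt_d2
    linarith
  have hp0 : (0:ℝ) < p := by linarith
  have hq0 : (0:ℝ) < q := by linarith
  have hsinb : ∀ r : ℝ, 629 ≤ r → 0 < Real.sin (Real.pi / r) ∧
      Real.sin (Real.pi / r) ≤ 1 / 20 := by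
    intro r hr
    have hr0 : (0:ℝ) < r := by linarith
    have h1 : 0 < Real.pi / r := by positivity
    have h2 : Real.pi / r ≤ Real.pi / 629 := by
      apply div_le_div_of_nonneg_left (le_of_lt hpi) (by norm_num) hr
    have h3 : Real.pi / 629 < Real.pi := by
      rw [div_lt_iff₀ (by norm_num)]
      nlinarith
    constructor
    · exact Real.sin_pos_of_pos_of_lt_pi h1 (lt_of_le_of_lt h2 h3)
    · have := Real.sin_le (le_of_lt h1)
      have : Real.sin (Real.pi / r) ≤ Real.pi / 629 := le_trans this h2
      have h4 : Real.pi / 629 ≤ 1 / 20 := by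
        rw [div_le_iff₀ (by norm_num)]
        nlinarith
      linarith
  obtain ⟨hs0, hs1⟩ := hsinb p hp
  obtain ⟨ht0, ht1⟩ := hsinb q hq
  set s := Real.sin (Real.pi / p)
  set t := Real.sin (Real.pi / q)
  have hst : 0 < s * t := mul_pos hs0 ht0
  have hB : (10:ℝ) ≤ 1 / (2 * s * t) := by
    rw [le_div_iff₀ (by positivity)]
    nlinarith
  have e1 : 5 / (4 * s ^ 2 * t ^ 2) = 5 * (1 / (2 * s * t)) ^ 2 := by
    field_simp
    ring
  have e2 : 1 / (2 * s * t) = 1 / (2 * s * t) := rfl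
  rw [e1]
  exact key _ hB
end

section
/- Let X = [[1,1],[0,1]] and Y = [[1,0],[μ,1]] in SL(2,ℂ[μ]) and let A = X Y X⁻¹ Y X Y⁻¹. Then tr(A) + 2 = (μ + 1)(μ² − 3μ + 4), and the roots of this polynomial are −1 and (3 ± i√7)/2, each of the latter having modulus exactly 2. -/
open Matrix

lemma abs_aux (s : ℝ) (h7 : s ^ 2 = 7) :
    ‖(3 + Complex.I * s) / 2‖ = 2 ∧
    ‖(3 - Complex.I * s) / 2‖ = 2 := by
  constructor
  · have : ((3 + Complex.I * s) / 2 : ℂ) = ⟨3/2, s / 2⟩ := by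
      apply Complex.ext <;> simp [Complex.div_re, Complex.div_im]
    rw [this, Complex.norm_def, Complex.normSq_mk]
    rw [show (3/2 * (3/2) + s / 2 * (s / 2) : ℝ) = 2^2 by nlinarith]
    exact Real.sqrt_sq (by norm_num)
  · have : ((3 - Complex.I * s) / 2 : ℂ) = ⟨3/2, -s / 2⟩ := by
      apply Complex.ext <;> simp [Complex.div_re, Complex.div_im]
    rw [this, Complex.norm_def, Complex.normSq_mk]
    rw [show (3/2 * (3/2) + -s / 2 * (-s / 2) : ℝ) = 2^2 by nlinarith]
    exact Real.sqrt_sq (by norm_num)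

/-- for X = [[1,1],[0,1]], Y = [[1,0],[μ,1]] and the Farey word
A = X Y X⁻¹ Y X Y⁻¹, we have tr(A) + 2 = (μ + 1)(μ² − 3μ + 4); the roots of this cubic
are −1 and (3 ± i√7)/2, and the two complex roots have modulus exactly 2. -/
theorem stmt19 :
    (∀ μ : ℂ,
      Matrix.trace
          ((!![1, 1; 0, 1] : Matrix (Fin 2) (Fin 2) ℂ) * !![1, 0; μ, 1] *
            (!![1, 1; 0, 1] : Matrix (Fin 2) (Fin 2) ℂ)⁻¹ * !![1, 0; μ, 1] *
            !![1, 1; 0, 1] * (!![1, 0; μ, 1] : Matrix (Fin 2) (Fin 2) ℂ)⁻¹) + 2 =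
        (μ + 1) * (μ ^ 2 - 3 * μ + 4)) ∧
    (∀ z : ℂ, (z + 1) * (z ^ 2 - 3 * z + 4) = 0 ↔
      z = -1 ∨ z = (3 + Complex.I * Real.sqrt 7) / 2 ∨
        z = (3 - Complex.I * Real.sqrt 7) / 2) ∧
    ‖(3 + Complex.I * Real.sqrt 7) / 2‖ = 2 ∧
    ‖(3 - Complex.I * Real.sqrt 7) / 2‖ = 2 := by
  have hs7 : (Real.sqrt 7 : ℂ) ^ 2 = 7 := by
    norm_cast
    rw [Real.sq_sqrt] <;> norm_num
  have habs := abs_aux (Real.sqrt 7) (Real.sq_sqrt (by norm_num))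
  refine ⟨?_, ?_, habs.1, habs.2⟩
  · intro μ
    have hX : (!![1, 1; 0, 1] : Matrix (Fin 2) (Fin 2) ℂ)⁻¹ = !![1, -1; 0, 1] := by
      apply inv_eq_right_inv
      simp [Matrix.mul_fin_two]
      exact (Matrix.one_fin_two).symm
    have hY : (!![1, 0; μ, 1] : Matrix (Fin 2) (Fin 2) ℂ)⁻¹ = !![1, 0; -μ, 1] := by
      apply inv_eq_right_inv
      simp [Matrix.mul_fin_two]
      exact (Matrix.one_fin_two).symm
    rw [hX, hY]
    simp [Matrix.mul_fin_two, Matrix.trace_fin_two]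
    ring
  · intro z
    have h : (Complex.I * Real.sqrt 7) ^ 2 = -7 := by
      rw [mul_pow, Complex.I_sq, hs7]; ring
    have key : (z + 1) * (z ^ 2 - 3 * z + 4) =
        (z + 1) * ((z - (3 + Complex.I * Real.sqrt 7) / 2) *
          (z - (3 - Complex.I * Real.sqrt 7) / 2)) := by
      linear_combination ((z + 1) / 4) * h
    rw [key, mul_eq_zero, mul_eq_zero]
    constructor
    · rintro (h | h | h)
      · left; linear_combination h
      · right; left; linear_combination h
      · right; right; linear_combination h
    · rintro (h | h | h)
      · left; linear_combination h
      · right; left; linear_combination h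
      · right; right; linear_combination h
end
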